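/- arXiv:2308.14606 — 5 statements merged into one kernel-verified Lean document; each statement's English description precedes it below -/
import Mathlib

section
/- Let (H^k) be a nonnegative sequence satisfying H^{k+1} ≤ (1−ω²)H^k + A/(k+k_0)² for all k ≥ 0, where ω ∈ (0,1), A ≥ 0, and k_0 ≥ 1. Then there exists a constant a ≥ (k_0+1)²/k_0² such that H^k ≤ (1−ω²)^k H^0 + (a·A/ω²)·1/(k+k_0)² for all k ≥ 0. -/
set_option maxHeartbeats 1000000


theorem stmt_10 (H : ℕ → ℝ) (hpos : ∀ k, 0 ≤ H k)
    (omega A : ℝ) (homega0 : 0 < omega) (homega1 : omega < 1) (hA : 0 ≤ A)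
    (k0 : ℕ) (hk0 : 1 ≤ k0)
    (hrec : ∀ k : ℕ, H (k + 1) ≤ (1 - omega ^ 2) * H k + A / ((k : ℝ) + k0) ^ 2) :
    ∃ a : ℝ, ((k0 : ℝ) + 1) ^ 2 / (k0 : ℝ) ^ 2 ≤ a ∧
      ∀ k : ℕ, H k ≤ (1 - omega ^ 2) ^ k * H 0 + (a * A / omega ^ 2) / ((k : ℝ) + k0) ^ 2 := by
  set q := omega ^ 2 with hqdef
  have hq0 : 0 < q := pow_pos homega0 2
  have hq1 : q < 1 := by nlinarith
  have hq1' : (0:ℝ) ≤ 1 - q := by linarith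
  have hk0R : (1:ℝ) ≤ (k0:ℝ) := by exact_mod_cast hk0
  -- crude bound
  have hQ : ∀ k : ℕ, H k ≤ (1 - q) ^ k * H 0 + A / q := by
    intro k
    induction k with
    | zero =>
      have : 0 ≤ A / q := div_nonneg hA hq0.le
      simp only [pow_zero, one_mul]
      linarith
    | succ k ih =>
      have hs1 : (1:ℝ) ≤ (k:ℝ) + k0 := by
        have : (0:ℝ) ≤ (k:ℝ) := Nat.cast_nonneg k
        linarith
      have h1 : A / ((k:ℝ)+k0)^2 ≤ A := by
        apply div_le_self hA; nlinarith
      have h2 := mul_le_mul_of_nonneg_left ih hq1'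
      calc H (k+1) ≤ (1-q) * H k + A/((k:ℝ)+k0)^2 := hrec k
        _ ≤ (1-q) * ((1-q)^k * H 0 + A/q) + A := by linarith
        _ = (1-q)^(k+1) * H 0 + A/q := by field_simp; ring
  refine ⟨max (((k0:ℝ)+1)^2/(k0:ℝ)^2) (max 8 ((6/q+1)^2)), le_max_left _ _, ?_⟩
  set a := max (((k0:ℝ)+1)^2/(k0:ℝ)^2) (max 8 ((6/q+1)^2)) with ha
  have ha8 : (8:ℝ) ≤ a := le_trans (le_max_left _ _) (le_max_right _ _)
  have haq : (6/q+1)^2 ≤ a := le_trans (le_max_right _ _) (le_max_right _ _)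
  have ha0 : (0:ℝ) ≤ a := by linarith
  set C := a * A / q with hCdef
  have hC0 : 0 ≤ C := div_nonneg (mul_nonneg ha0 hA) hq0.le
  have hCq : C * q = a * A := by rw [hCdef]; field_simp
  intro k
  induction k with
  | zero =>
    have h1 : (0:ℝ) < ((0:ℕ):ℝ) + (k0:ℝ) := by push_cast; linarith
    have : 0 ≤ C / (((0:ℕ):ℝ) + (k0:ℝ))^2 := div_nonneg hC0 (by positivity)
    simp only [pow_zero, one_mul]
    linarith
  | succ k ih =>
    set s : ℝ := (k:ℝ) + (k0:ℝ) with hs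
    have hs1 : (1:ℝ) ≤ s := by
      have : (0:ℝ) ≤ (k:ℝ) := Nat.cast_nonneg k
      rw [hs]; linarith
    have hs0 : (0:ℝ) < s := by linarith
    have hgoal : (((k+1:ℕ)):ℝ) + (k0:ℝ) = s + 1 := by rw [hs]; push_cast; ring
    rw [hgoal]
    rcases le_or_gt (6/q) s with hge | hlt
    · -- main inductive step
      have hge6 : (6:ℝ) ≤ q * s := by
        rw [div_le_iff₀ hq0] at hge; linarith
      have e1 : (s+1)^2 ≤ s^2 + 3*s := by nlinarith
      have e2 : (1-q)*(s^2+3*s) ≤ (1-q/2)*s^2 := by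
        nlinarith [mul_le_mul_of_nonneg_right hge6 hs0.le, mul_nonneg (mul_nonneg hq0.le hs0.le) hs0.le]
      have e3 : (1-q)*(s+1)^2 ≤ (1-q/2)*s^2 :=
        le_trans (mul_le_mul_of_nonneg_left e1 hq1') e2
      have e4 : C*((1-q)*(s+1)^2) ≤ C*((1-q/2)*s^2) := mul_le_mul_of_nonneg_left e3 hC0
      have e5 : A*(s+1)^2 ≤ 4*(A*s^2) := by
        nlinarith [mul_le_mul_of_nonneg_left e1 hA, mul_le_mul_of_nonneg_left hs1 (mul_nonneg hA hs0.le)]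
      have e6 : 8*A ≤ C*q := by rw [hCq]; exact mul_le_mul_of_nonneg_right ha8 hA
      have e7 : (8*A)*(s^2/2) ≤ (C*q)*(s^2/2) :=
        mul_le_mul_of_nonneg_right e6 (by positivity)
      have e8 : 4*(A*s^2) ≤ C*q*(s^2/2) := by
        have : (4:ℝ)*(A*s^2) = 8*A*(s^2/2) := by ring
        linarith [e7]
      have key : ((1-q)*C + A) * (s+1)^2 ≤ C * s^2 := by
        calc ((1-q)*C + A) * (s+1)^2
            = C*((1-q)*(s+1)^2) + A*(s+1)^2 := by ring
          _ ≤ C*((1-q/2)*s^2) + 4*(A*s^2) := add_le_add e4 e5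
          _ ≤ C*((1-q/2)*s^2) + C*q*(s^2/2) := add_le_add le_rfl e8
          _ = C * s^2 := by ring
      have step : (1-q)*C/s^2 + A/s^2 ≤ C/(s+1)^2 := by
        rw [← add_div, div_le_div_iff₀ (by positivity) (by positivity)]
        exact key
      have hrk : H (k+1) ≤ (1-q) * H k + A/s^2 := by
        have h := hrec k
        rw [← hs] at h
        exact h
      have h2 : (1-q) * H k ≤ (1-q)*((1-q)^k * H 0 + C/s^2) :=
        mul_le_mul_of_nonneg_left ih hq1'
      calc H (k+1) ≤ (1-q) * H k + A/s^2 := hrk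
        _ ≤ (1-q)*((1-q)^k * H 0 + C/s^2) + A/s^2 := add_le_add h2 le_rfl
        _ = (1-q)^(k+1) * H 0 + ((1-q)*C/s^2 + A/s^2) := by ring
        _ ≤ (1-q)^(k+1) * H 0 + C/(s+1)^2 := add_le_add le_rfl step
    · -- small k: use crude bound
      have hQ1 := hQ (k+1)
      have hle : (s+1)^2 ≤ a :=
        le_trans (pow_le_pow_left₀ (by linarith) (by linarith) 2) haq
      have hAq : A/q ≤ C/(s+1)^2 := by
        have hpos1 : (0:ℝ) < (s+1)^2 := by positivity
        have h1 : (1:ℝ) ≤ a/(s+1)^2 := (one_le_div hpos1).2 hle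
        calc A/q = A/q * 1 := (mul_one _).symm
          _ ≤ A/q * (a/(s+1)^2) :=
              mul_le_mul_of_nonneg_left h1 (div_nonneg hA hq0.le)
          _ = C/(s+1)^2 := by rw [hCdef]; ring
      calc H (k+1) ≤ (1-q)^(k+1) * H 0 + A/q := hQ1
        _ ≤ (1-q)^(k+1) * H 0 + C/(s+1)^2 := by linarith
end

section
/- Let x_1, ..., x_R ∈ R^D and x̂ ∈ R^D. Then ∑_{d=1}^D max_{m} ([x_m]_d − [x̂]_d)² ≤ min{D, R} · max_m ‖x_m − x̂‖², where [y]_d denotes the d-th coordinate and the maxima are over m ∈ {1,...,R}. -/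
theorem stmt_12 (R D : ℕ) (hne : (Finset.univ : Finset (Fin R)).Nonempty)
    (x : Fin R → EuclideanSpace ℝ (Fin D))
    (xhat : EuclideanSpace ℝ (Fin D)) :
    ∑ d : Fin D, (Finset.univ.sup' hne fun m => (x m d - xhat d) ^ 2)
      ≤ (min D R : ℝ) * Finset.univ.sup' hne fun m => ‖x m - xhat‖ ^ 2 := by
  set M : ℝ := Finset.univ.sup' hne fun m => ‖x m - xhat‖ ^ 2 with hM
  have hnorm : ∀ m : Fin R, ‖x m - xhat‖ ^ 2 = ∑ d : Fin D, (x m d - xhat d) ^ 2 := by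
    intro m
    rw [EuclideanSpace.norm_eq, Real.sq_sqrt (by positivity)]
    simp [sq_abs]
  have hcoord : ∀ (m : Fin R) (d : Fin D), (x m d - xhat d) ^ 2 ≤ ‖x m - xhat‖ ^ 2 := by
    intro m d
    rw [hnorm m]
    exact Finset.single_le_sum (f := fun d => (x m d - xhat d) ^ 2)
      (fun i _ => sq_nonneg _) (Finset.mem_univ d)
  have hMle : ∀ m : Fin R, ‖x m - xhat‖ ^ 2 ≤ M := fun m =>
    Finset.le_sup' (fun m => ‖x m - xhat‖ ^ 2) (Finset.mem_univ m)
  have hD : ∑ d : Fin D, (Finset.univ.sup' hne fun m => (x m d - xhat d) ^ 2)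
      ≤ (D : ℝ) * M := by
    calc ∑ d : Fin D, (Finset.univ.sup' hne fun m => (x m d - xhat d) ^ 2)
        ≤ ∑ _d : Fin D, M := by
          refine Finset.sum_le_sum fun d _ => ?_
          exact Finset.sup'_le hne _ fun m _ => le_trans (hcoord m d) (hMle m)
      _ = (D : ℝ) * M := by simp [mul_comm]
  have hR : ∑ d : Fin D, (Finset.univ.sup' hne fun m => (x m d - xhat d) ^ 2)
      ≤ (R : ℝ) * M := by
    calc ∑ d : Fin D, (Finset.univ.sup' hne fun m => (x m d - xhat d) ^ 2)
        ≤ ∑ d : Fin D, ∑ m : Fin R, (x m d - xhat d) ^ 2 := by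
          refine Finset.sum_le_sum fun d _ => ?_
          refine Finset.sup'_le hne _ fun m _ => ?_
          exact Finset.single_le_sum (f := fun m => (x m d - xhat d) ^ 2)
            (fun i _ => sq_nonneg _) (Finset.mem_univ m)
      _ = ∑ m : Fin R, ‖x m - xhat‖ ^ 2 := by
          rw [Finset.sum_comm]; exact Finset.sum_congr rfl fun m _ => (hnorm m).symm
      _ ≤ ∑ _m : Fin R, M := Finset.sum_le_sum fun m _ => hMle m
      _ = (R : ℝ) * M := by simp [mul_comm]
  rcases le_total D R with h | h
  · rwa [min_eq_left (Nat.cast_le.mpr h)]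
  · rwa [min_eq_right (Nat.cast_le.mpr h)]
end

section
/- Let S be a finite set of vectors in R^D with weighted average x̂ = ∑_{m∈S} w_m x_m where w_m ≥ 0 and ∑_{m∈S} w_m = 1. Let T ⊆ S with total weight W_T = ∑_{m∈T} w_m < 1, and let x̂_T = (∑_{m∈T} w_m x_m)/W_T be the renormalized weighted average over T. Then ‖x̂_T − x̂‖ ≤ ((1−W_T)/W_T)·max_{m∈S∖T} ‖x_m − x̂_T‖. -/
theorem stmt_13 {ι : Type*} [DecidableEq ι] (D : ℕ) (S T : Finset ι) (hTS : T ⊆ S)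
    (hST : (S \ T).Nonempty)
    (x : ι → EuclideanSpace ℝ (Fin D))
    (w : ι → ℝ) (hw0 : ∀ m ∈ S, 0 ≤ w m) (hw1 : ∑ m ∈ S, w m = 1)
    (WT : ℝ) (hWT : WT = ∑ m ∈ T, w m) (hWT0 : 0 < WT) (hWT1 : WT < 1)
    (xhat xhatT : EuclideanSpace ℝ (Fin D))
    (hxhat : xhat = ∑ m ∈ S, w m • x m)
    (hxhatT : xhatT = WT⁻¹ • ∑ m ∈ T, w m • x m) :
    ‖xhatT - xhat‖ ≤ ((1 - WT) / WT) * (S \ T).sup' hST fun m => ‖x m - xhatT‖ := by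
  set M := (S \ T).sup' hST fun m => ‖x m - xhatT‖ with hM
  obtain ⟨m0, hm0⟩ := hST
  have hM0 : 0 ≤ M := le_trans (norm_nonneg _) (Finset.le_sup' (fun m => ‖x m - xhatT‖) hm0)
  have hwsd : ∑ m ∈ S \ T, w m = 1 - WT := by
    have := Finset.sum_sdiff (f := w) hTS
    rw [hWT]; linarith
  have hT : ∑ m ∈ T, w m • x m = WT • xhatT := by
    rw [hxhatT, smul_inv_smul₀ hWT0.ne']
  have key : xhatT - xhat = ∑ m ∈ S \ T, w m • (xhatT - x m) := by
    simp only [smul_sub]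
    rw [Finset.sum_sub_distrib, ← Finset.sum_smul, hwsd, hxhat,
      ← Finset.sum_sdiff (f := fun m => w m • x m) hTS, hT]
    module
  have hbound : ‖xhatT - xhat‖ ≤ (1 - WT) * M := by
    rw [key]
    calc ‖∑ m ∈ S \ T, w m • (xhatT - x m)‖
        ≤ ∑ m ∈ S \ T, ‖w m • (xhatT - x m)‖ := norm_sum_le _ _
      _ ≤ ∑ m ∈ S \ T, w m * M := by
          apply Finset.sum_le_sum
          intro m hm
          have hwm : 0 ≤ w m := hw0 m (Finset.mem_sdiff.mp hm).1
          rw [norm_smul, Real.norm_eq_abs, abs_of_nonneg hwm]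
          apply mul_le_mul_of_nonneg_left _ hwm
          rw [norm_sub_rev]
          exact Finset.le_sup' (fun m => ‖x m - xhatT‖) hm
      _ = (1 - WT) * M := by rw [← Finset.sum_mul, hwsd]
  refine hbound.trans (mul_le_mul_of_nonneg_right ?_ hM0)
  rw [le_div_iff₀ hWT0]
  nlinarith
end

section
/- Trimmed mean over a fully connected network: let R > B ≥ 1, let x_1, ..., x_R ∈ R (scalars) be honest values with average x̄, and let b_1, ..., b_B ∈ R be arbitrary. Suppose the trimmed mean removes the B largest and B smallest of the R+B values x_1,...,x_R,b_1,...,b_B and averages the rest, obtaining y. If all b_j are removed by the trimming, then |y − x̄| ≤ (2B/(R−B+1))·max_n |x_n − x̄|. -/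
theorem stmt_17 (R B : ℕ) (hB : 1 ≤ B) (hRB : B < R)
    (hne : (Finset.univ : Finset (Fin R)).Nonempty)
    (x : Fin R → ℝ) (b : Fin B → ℝ)
    (xbar : ℝ) (hxbar : xbar = (1 / (R : ℝ)) * ∑ n, x n)
    (v : Fin R ⊕ Fin B → ℝ) (hv : v = Sum.elim x b)
    (Lo Hi : Finset (Fin R ⊕ Fin B)) (hLoHi : Disjoint Lo Hi)
    (hLo : Lo.card = B) (hHi : Hi.card = B)
    (hLosmall : ∀ i ∈ Lo, ∀ j ∈ Finset.univ \ (Lo ∪ Hi), v i ≤ v j)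
    (hHilarge : ∀ i ∈ Hi, ∀ j ∈ Finset.univ \ (Lo ∪ Hi), v j ≤ v i)
    (hbremoved : ∀ j : Fin B, Sum.inr j ∈ Lo ∪ Hi)
    (y : ℝ) (hy : y = (∑ i ∈ Finset.univ \ (Lo ∪ Hi), v i) / ((R : ℝ) - B)) :
    |y - xbar| ≤ (2 * B / ((R : ℝ) - B + 1)) * Finset.univ.sup' hne fun n => |x n - xbar| := by
  set M := Finset.univ.sup' hne fun n => |x n - xbar| with hM
  have hMi : ∀ n, |x n - xbar| ≤ M := fun n => Finset.le_sup' (fun n => |x n - xbar|) (Finset.mem_univ n)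
  have hM0 : 0 ≤ M := le_trans (abs_nonneg _) (hMi hne.choose)
  set S := Finset.univ \ (Lo ∪ Hi) with hS
  set T := Finset.univ.filter (fun n => Sum.inl n ∈ S) with hT
  have hcardLH : (Lo ∪ Hi).card = 2 * B := by
    rw [Finset.card_union_of_disjoint hLoHi, hLo, hHi]; ring
  have hcardS : S.card = R - B := by
    rw [hS, Finset.card_sdiff_of_subset (Finset.subset_univ _), hcardLH, Finset.card_univ]
    simp only [Fintype.card_sum, Fintype.card_fin]
    omega
  have hSim : S = T.image Sum.inl := by
    ext i
    cases i with
    | inl n => simp [hT]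
    | inr j =>
      simp only [Finset.mem_image]
      constructor
      · intro h
        exact absurd (hbremoved j) (by simpa [hS] using h)
      · rintro ⟨m, -, hm⟩; exact absurd hm (by simp)
  have hcardT : T.card = R - B := by
    rw [← hcardS, hSim, Finset.card_image_of_injective _ Sum.inl_injective]
  have hsumS : ∑ i ∈ S, v i = ∑ n ∈ T, x n := by
    rw [hSim, Finset.sum_image (fun a _ c _ h => Sum.inl_injective h)]
    simp [hv]
  have hRner : (R:ℝ) ≠ 0 := by
    have : 0 < R := lt_of_le_of_lt (Nat.zero_le _) hRB
    positivity
  have hRBr : (1:ℝ) ≤ (R:ℝ) - B := by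
    have : (B:ℝ) + 1 ≤ (R:ℝ) := by exact_mod_cast hRB
    linarith
  have hcastT : ((R - B : ℕ):ℝ) = (R:ℝ) - B := by
    have : B ≤ R := hRB.le
    push_cast [this]; ring
  have hy2 : y - xbar = (∑ n ∈ T, (x n - xbar)) / ((R:ℝ) - B) := by
    have hs : ∑ n ∈ T, (x n - xbar) = (∑ n ∈ T, x n) - ((R:ℝ) - B) * xbar := by
      rw [Finset.sum_sub_distrib, Finset.sum_const, hcardT, nsmul_eq_mul, hcastT]
    rw [hy, hsumS, hs, sub_div,
      mul_div_cancel_left₀ _ (by linarith : ((R:ℝ) - B) ≠ 0)]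
  have htotal : ∑ n, (x n - xbar) = 0 := by
    rw [Finset.sum_sub_distrib, Finset.sum_const, Finset.card_univ, Fintype.card_fin,
      nsmul_eq_mul, hxbar]
    field_simp
    ring
  have hTc : ∑ n ∈ T, (x n - xbar) = - ∑ n ∈ Tᶜ, (x n - xbar) := by
    have h := Finset.sum_add_sum_compl T (fun n => x n - xbar)
    rw [htotal] at h
    linarith
  have hcardTc : Tᶜ.card = B := by
    rw [Finset.card_compl, hcardT, Fintype.card_fin]
    omega
  have hbound : |∑ n ∈ Tᶜ, (x n - xbar)| ≤ (B:ℝ) * M := by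
    calc |∑ n ∈ Tᶜ, (x n - xbar)| ≤ ∑ n ∈ Tᶜ, |x n - xbar| :=
          Finset.abs_sum_le_sum_abs _ _
      _ ≤ Tᶜ.card • M := Finset.sum_le_card_nsmul _ _ _ (fun n _ => hMi n)
      _ = (B:ℝ) * M := by rw [hcardTc, nsmul_eq_mul]
  have hyb : |y - xbar| ≤ (B:ℝ) * M / ((R:ℝ) - B) := by
    rw [hy2, hTc, abs_div, abs_neg, abs_of_pos (by linarith : (0:ℝ) < (R:ℝ) - B)]
    gcongr
  refine hyb.trans ?_
  rw [div_mul_eq_mul_div, div_le_div_iff₀ (by linarith) (by linarith)]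
  have hB0 : (0:ℝ) ≤ (B:ℝ) := Nat.cast_nonneg B
  nlinarith [mul_nonneg (mul_nonneg hB0 hM0) (by linarith : (0:ℝ) ≤ (R:ℝ) - B - 1)]
end

section
/- Let x_1, ..., x_R ∈ R^D with average x̄, and let T ⊂ {1,...,R} with |T| = R − q for some 1 ≤ q < R. Let x̂_T = (1/|T|)∑_{m∈T} x_m. Then ‖x̂_T − x̄‖ ≤ (q/(R−q))·max_{m∉T} ‖x_m − x̂_T‖. -/
theorem stmt_18 (R D q : ℕ) (hq : 1 ≤ q) (hqR : q < R)
    (T : Finset (Fin R)) (hT : T.card = R - q)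
    (hne : (Finset.univ \ T).Nonempty)
    (x : Fin R → EuclideanSpace ℝ (Fin D))
    (xbar xhatT : EuclideanSpace ℝ (Fin D))
    (hxbar : xbar = (R : ℝ)⁻¹ • ∑ m, x m)
    (hxhatT : xhatT = ((T.card : ℝ))⁻¹ • ∑ m ∈ T, x m) :
    ‖xhatT - xbar‖ ≤ ((q : ℝ) / ((R : ℝ) - q)) *
      (Finset.univ \ T).sup' hne fun m => ‖x m - xhatT‖ := by
  set S := (Finset.univ \ T) with hS
  set M := S.sup' hne fun m => ‖x m - xhatT‖ with hM
  have hqR' : (q : ℝ) < R := by exact_mod_cast hqR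
  have hR0 : (0 : ℝ) < R := by
    have : (0:ℝ) ≤ q := by positivity
    linarith
  have hRq : (0 : ℝ) < (R : ℝ) - q := by linarith
  have hqle : q ≤ R := hqR.le
  have hcardS : S.card = q := by
    rw [hS, Finset.card_sdiff_of_subset (Finset.subset_univ T), Finset.card_univ, Fintype.card_fin, hT]
    omega
  have hcast : ((R - q : ℕ) : ℝ) = (R : ℝ) - q := by
    push_cast [hqle]; ring
  have hTsum : ∑ m ∈ T, x m = ((R : ℝ) - q) • xhatT := by
    rw [hxhatT, hT, hcast, smul_smul, mul_inv_cancel₀ (ne_of_gt hRq), one_smul]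
  have hsplit : ∑ m, x m = ∑ m ∈ S, x m + ∑ m ∈ T, x m := by
    rw [hS, Finset.sum_sdiff (Finset.subset_univ T)]
  have key : xhatT - xbar = (R : ℝ)⁻¹ • ∑ m ∈ S, (xhatT - x m) := by
    rw [hxbar, hsplit, hTsum, Finset.sum_sub_distrib, Finset.sum_const, hcardS]
    rw [smul_sub, smul_add, smul_smul]
    have hq' : (q : ℝ) • xhatT = q • xhatT := ((Nat.cast_smul_eq_nsmul ℝ q xhatT).symm).symm
    rw [← hq', smul_smul]
    have : (R:ℝ)⁻¹ * ((R:ℝ) - q) = 1 - (R:ℝ)⁻¹ * q := by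
      field_simp
    rw [this]
    rw [sub_smul, one_smul]
    abel
  have hM0 : 0 ≤ M := by
    obtain ⟨m, hm⟩ := hne
    exact le_trans (norm_nonneg _) (Finset.le_sup' (fun m => ‖x m - xhatT‖) hm)
  calc ‖xhatT - xbar‖ = ‖(R : ℝ)⁻¹ • ∑ m ∈ S, (xhatT - x m)‖ := by rw [key]
    _ ≤ (R : ℝ)⁻¹ * ∑ m ∈ S, ‖xhatT - x m‖ := by
        rw [norm_smul, Real.norm_eq_abs, abs_of_nonneg (by positivity)]
        gcongr
        exact norm_sum_le _ _
    _ ≤ (R : ℝ)⁻¹ * ((q : ℝ) * M) := by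
        gcongr
        calc ∑ m ∈ S, ‖xhatT - x m‖ ≤ ∑ m ∈ S, M := by
              refine Finset.sum_le_sum fun m hm => ?_
              rw [norm_sub_rev]
              exact Finset.le_sup' (fun m => ‖x m - xhatT‖) hm
          _ = (q : ℝ) * M := by
              rw [Finset.sum_const, hcardS, nsmul_eq_mul]
    _ ≤ ((q : ℝ) / ((R : ℝ) - q)) * M := by
        rw [inv_mul_eq_div, div_mul_eq_mul_div, div_le_div_iff₀ hR0 hRq]
        have hq0 : (0:ℝ) ≤ q := by positivity
        nlinarith [mul_nonneg hq0 hM0, mul_nonneg (mul_nonneg hq0 hM0) hq0]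
end
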